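/- For the Gaussian family f_σ(s) = exp(−s²/(2σ²)), if ŝ satisfies Aŝ = x and F_σ(ŝ) ≥ m − (n−k), where A is an n×m URP matrix with unit columns and s⁰ is a solution with ‖s⁰‖₀ = k ≤ n/2, then ‖ŝ − s⁰‖ < (M+1)·m·σ·√(2 ln m). -/
import Mathlib

open Matrix Finset Filter

noncomputable def vnorm {k : ℕ} (s : Fin k → ℝ) : ℝ := Real.sqrt (∑ i, (s i)^2)

noncomputable def mnorm {p q : ℕ} (L : Matrix (Fin p) (Fin q) ℝ) : ℝ :=
  Real.sqrt (∑ i, ∑ j, (L i j)^2)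

def URP {n m : ℕ} (A : Matrix (Fin n) (Fin m) ℝ) : Prop :=
  ∀ g : Fin n → Fin m, Function.Injective g → (A.submatrix id g).det ≠ 0

def UnitCols {n m : ℕ} (A : Matrix (Fin n) (Fin m) ℝ) : Prop :=
  ∀ j, vnorm (fun i => A i j) = 1

def LeftInvBound {n m : ℕ} (A : Matrix (Fin n) (Fin m) ℝ) (M : ℝ) : Prop :=
  ∀ (k : ℕ), k ≤ n → ∀ g : Fin k → Fin m, Function.Injective g →
    ∃ L : Matrix (Fin k) (Fin n) ℝ, L * A.submatrix id g = 1 ∧ mnorm L ≤ M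

lemma vnorm_eq_norm {k : ℕ} (s : Fin k → ℝ) :
    vnorm s = ‖(WithLp.linearEquiv 2 ℝ (Fin k → ℝ)).symm s‖ := by
  rw [EuclideanSpace.norm_eq]
  simp [vnorm, sq_abs]

lemma vnorm_nonneg {k : ℕ} (s : Fin k → ℝ) : 0 ≤ vnorm s := Real.sqrt_nonneg _

lemma mnorm_nonneg {p q : ℕ} (L : Matrix (Fin p) (Fin q) ℝ) : 0 ≤ mnorm L := Real.sqrt_nonneg _

lemma vnorm_add_le {k : ℕ} (a b : Fin k → ℝ) : vnorm (a + b) ≤ vnorm a + vnorm b := by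
  rw [vnorm_eq_norm, vnorm_eq_norm, vnorm_eq_norm, map_add]
  exact norm_add_le _ _

lemma vnorm_neg {k : ℕ} (a : Fin k → ℝ) : vnorm (-a) = vnorm a := by
  rw [vnorm_eq_norm, vnorm_eq_norm, map_neg, norm_neg]

lemma vnorm_mulVec_le {p q : ℕ} (L : Matrix (Fin p) (Fin q) ℝ) (v : Fin q → ℝ) :
    vnorm (L.mulVec v) ≤ mnorm L * vnorm v := by
  unfold vnorm mnorm
  rw [← Real.sqrt_mul (by positivity)]
  apply Real.sqrt_le_sqrt
  rw [Finset.sum_mul]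
  apply Finset.sum_le_sum
  intro i _
  calc (L.mulVec v i)^2 = (∑ j, L i j * v j)^2 := by simp [Matrix.mulVec, dotProduct]
    _ ≤ (∑ j, (L i j)^2) * ∑ j, (v j)^2 := Finset.sum_mul_sq_le_sq_mul_sq _ _ _

lemma vnorm_mulVec_le_sum {n m : ℕ} (A : Matrix (Fin n) (Fin m) ℝ) (v : Fin m → ℝ) :
    vnorm (A.mulVec v) ≤ ∑ j, |v j| * vnorm (fun i => A i j) := by
  have hAv : A.mulVec v = ∑ j, v j • (fun i => A i j) := by
    funext i
    simp [Matrix.mulVec, dotProduct, Finset.sum_apply, mul_comm]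
  rw [vnorm_eq_norm, hAv, map_sum]
  refine (norm_sum_le _ _).trans ?_
  apply Finset.sum_le_sum
  intro j _
  rw [_root_.map_smul, norm_smul, Real.norm_eq_abs, vnorm_eq_norm]


set_option maxHeartbeats 2000000 in
theorem stmt3 {n m : ℕ} (hnm : n < m) (A : Matrix (Fin n) (Fin m) ℝ)
    (hcols : UnitCols A) (hURP : URP A) (M : ℝ) (hM : LeftInvBound A M)
    (σ : ℝ) (hσ : 0 < σ)
    (x : Fin n → ℝ) (k : ℕ) (hk : 2 * k ≤ n)
    (s0 : Fin m → ℝ) (hs0 : A.mulVec s0 = x)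
    (hs0k : (Finset.univ.filter fun i => s0 i ≠ 0).card = k)
    (shat : Fin m → ℝ) (hshat : A.mulVec shat = x)
    (hF : (m : ℝ) - ((n : ℝ) - k) ≤ ∑ i, Real.exp (-(shat i) ^ 2 / (2 * σ ^ 2))) :
    vnorm (shat - s0) < (M + 1) * m * σ * Real.sqrt (2 * Real.log m) := by
  have hm1 : 0 < m := lt_of_le_of_lt (Nat.zero_le n) hnm
  have hn1 : 1 ≤ n := by
    by_contra h
    push_neg at h
    have hn0 : n = 0 := by omega
    subst hn0
    have := hcols ⟨0, hm1⟩
    simp [vnorm] at this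
  have hm2 : 2 ≤ m := by omega
  have hmR : (2:ℝ) ≤ m := by exact_mod_cast hm2
  have hkn : k ≤ n := by omega
  set ε : ℝ := σ * Real.sqrt (2 * Real.log m) with hε_def
  have hlog : 0 < Real.log m := Real.log_pos (by linarith)
  have hε : 0 < ε := mul_pos hσ (Real.sqrt_pos.mpr (by linarith))
  have hM0 : 0 ≤ M := by
    obtain ⟨L0, _, hL0⟩ := hM 0 (Nat.zero_le n) Fin.elim0 (fun a => a.elim0)
    exact le_trans (mnorm_nonneg L0) hL0
  set T : Finset (Fin m) := univ.filter (fun i => ε < |shat i|) with hT_def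
  have hTsmall : ∀ i ∈ T, Real.exp (-(shat i)^2 / (2*σ^2)) < 1 / m := by
    intro i hi
    rw [hT_def, mem_filter] at hi
    have habs : ε < |shat i| := hi.2
    have h1 : ε^2 < (shat i)^2 := by nlinarith [sq_abs (shat i), abs_nonneg (shat i)]
    have hε2 : ε^2 = σ^2 * (2 * Real.log m) := by
      rw [hε_def, mul_pow, Real.sq_sqrt (by linarith)]
    have hlt : -(shat i)^2 / (2*σ^2) < - Real.log m := by
      rw [div_lt_iff₀ (by positivity)]
      nlinarith [sq_nonneg σ]
    calc Real.exp (-(shat i)^2 / (2*σ^2)) < Real.exp (-Real.log m) :=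
          Real.exp_lt_exp.mpr hlt
      _ = 1 / m := by
          rw [Real.exp_neg, Real.exp_log (by positivity), one_div]
  have hTub : ∀ i : Fin m, Real.exp (-(shat i)^2/(2*σ^2)) ≤ 1 := by
    intro i
    calc Real.exp (-(shat i)^2/(2*σ^2)) ≤ Real.exp 0 := by
          apply Real.exp_le_exp.mpr
          apply div_nonpos_of_nonpos_of_nonneg
          · nlinarith [sq_nonneg (shat i)]
          · positivity
      _ = 1 := Real.exp_zero
  have hTcard : T.card ≤ n - k := by
    by_contra hcon
    push_neg at hcon
    have hTne : T.Nonempty := Finset.card_pos.mp (by omega)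
    have h1 : ∑ i ∈ T, Real.exp (-(shat i)^2/(2*σ^2)) < (T.card : ℝ) * (1/m) := by
      calc ∑ i ∈ T, Real.exp (-(shat i)^2/(2*σ^2)) < ∑ _i ∈ T, (1/m : ℝ) :=
            Finset.sum_lt_sum_of_nonempty hTne hTsmall
        _ = (T.card : ℝ) * (1/m) := by rw [Finset.sum_const, nsmul_eq_mul]
    have h2 : ∑ i ∈ univ \ T, Real.exp (-(shat i)^2/(2*σ^2)) ≤ ((univ \ T).card : ℝ) := by
      calc ∑ i ∈ univ \ T, Real.exp (-(shat i)^2/(2*σ^2)) ≤ ∑ _i ∈ univ \ T, (1:ℝ) :=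
            Finset.sum_le_sum (fun i _ => hTub i)
        _ = ((univ \ T).card : ℝ) := by simp
    have hsum : ∑ i, Real.exp (-(shat i)^2/(2*σ^2))
        < (T.card : ℝ) * (1/m) + ((univ \ T).card : ℝ) := by
      rw [← Finset.sum_sdiff (Finset.subset_univ T)]
      linarith
    have hTle : T.card ≤ m := by
      calc T.card ≤ univ.card := Finset.card_le_card (Finset.subset_univ T)
        _ = m := by simp
    have hcardc : ((univ \ T).card : ℝ) = m - T.card := by
      rw [Finset.card_sdiff_of_subset (Finset.subset_univ T), Finset.card_univ, Fintype.card_fin]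
      push_cast [hTle]
      ring
    set t : ℕ := T.card with ht_def
    have hFc : (m:ℝ) - ((n:ℝ) - k) < (t:ℝ) * (1/m) + ((m:ℝ) - t) := by
      rw [← hcardc]
      calc (m:ℝ) - ((n:ℝ) - k) ≤ _ := hF
        _ < _ := hsum
    have hmpos : (0:ℝ) < m := by linarith
    have htm : (t:ℝ) * ((m:ℝ) - 1) < ((n:ℝ) - k) * m := by
      have := mul_lt_mul_of_pos_right hFc hmpos
      rw [add_mul, mul_assoc, one_div_mul_cancel (ne_of_gt hmpos)] at this
      nlinarith
    have htlb : ((n:ℝ) - k) + 1 ≤ t := by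
      have : n - k + 1 ≤ t := by omega
      have hcast : ((n - k : ℕ) : ℝ) = (n:ℝ) - k := by
        push_cast [hkn]; ring
      calc (n:ℝ) - k + 1 = ((n - k + 1 : ℕ) : ℝ) := by push_cast [hkn]; ring
        _ ≤ t := by exact_mod_cast this
    have hmn : (n:ℝ) + 1 ≤ m := by exact_mod_cast hnm
    have hnk0 : (0:ℝ) ≤ (n:ℝ) - k := by
      have : (k:ℝ) ≤ n := by exact_mod_cast hkn
      linarith
    nlinarith [mul_le_mul_of_nonneg_right htlb (show (0:ℝ) ≤ (m:ℝ) - 1 by linarith)]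
  -- the support set
  set S : Finset (Fin m) := (univ.filter fun i => s0 i ≠ 0) ∪ T with hS_def
  have hScard : S.card ≤ n := by
    calc S.card ≤ (univ.filter fun i => s0 i ≠ 0).card + T.card := Finset.card_union_le _ _
      _ ≤ k + (n - k) := by rw [hs0k]; omega
      _ = n := by omega
  set r : ℕ := S.card with hr_def
  set g : Fin r → Fin m := fun i => ((S.orderIsoOfFin rfl) i : Fin m) with hg_def
  have hginj : Function.Injective g := fun a b hab =>
    (S.orderIsoOfFin rfl).injective (Subtype.ext hab)
  have hgsum : ∀ (h : Fin m → ℝ), ∑ j : Fin r, h (g j) = ∑ i ∈ S, h i := by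
    intro h
    rw [← Finset.sum_coe_sort S h]
    exact Fintype.sum_equiv (S.orderIsoOfFin rfl).toEquiv _ _ (fun j => rfl)
  obtain ⟨L, hL1, hL2⟩ := hM r hScard g hginj
  set d : Fin m → ℝ := shat - s0 with hd_def
  have hd0 : A.mulVec d = 0 := by
    rw [hd_def, Matrix.mulVec_sub, hs0, hshat, sub_self]
  set ds : Fin m → ℝ := fun i => if i ∈ S then d i else 0 with hds_def
  set dc : Fin m → ℝ := fun i => if i ∈ S then 0 else d i with hdc_def
  have hsplit : d = ds + dc := by
    funext i
    by_cases h : i ∈ S <;> simp [hds_def, hdc_def, h]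
  have hAds : A.mulVec ds = - A.mulVec dc := by
    have : A.mulVec ds + A.mulVec dc = 0 := by
      rw [← Matrix.mulVec_add, ← hsplit, hd0]
    exact eq_neg_of_add_eq_zero_left this
  have key : (A.submatrix id g).mulVec (d ∘ g) = A.mulVec ds := by
    funext i
    show ∑ j, A.submatrix id g i j * (d ∘ g) j = ∑ j, A i j * ds j
    simp only [Matrix.submatrix_apply, id_eq, Function.comp_apply]
    rw [hgsum (fun j => A i j * d j)]
    simp only [hds_def, mul_ite, mul_zero]
    rw [Finset.sum_ite_mem, Finset.univ_inter]
  have hdg : d ∘ g = L.mulVec (A.mulVec ds) := by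
    rw [← key, Matrix.mulVec_mulVec, hL1, Matrix.one_mulVec]
  have hoffS : ∀ i, i ∉ S → |d i| ≤ ε := by
    intro i hi
    rw [hS_def, Finset.mem_union, not_or] at hi
    obtain ⟨h1, h2⟩ := hi
    rw [Finset.mem_filter] at h1
    have hs0i : s0 i = 0 := by
      by_contra hne
      exact h1 ⟨Finset.mem_univ i, hne⟩
    rw [hT_def, Finset.mem_filter] at h2
    have hsh : |shat i| ≤ ε := by
      by_contra hgt
      push_neg at hgt
      exact h2 ⟨Finset.mem_univ i, hgt⟩
    have : d i = shat i := by simp [hd_def, hs0i]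
    rw [this]
    exact hsh
  have hAdc_le : vnorm (A.mulVec dc) ≤ m * ε := by
    refine (vnorm_mulVec_le_sum A dc).trans ?_
    calc ∑ j, |dc j| * vnorm (fun i => A i j) = ∑ j, |dc j| := by
          have hcols' : ∀ j, vnorm (fun i => A i j) = 1 := hcols
          simp [hcols']
      _ ≤ ∑ _j : Fin m, ε := by
          apply Finset.sum_le_sum
          intro j _
          by_cases h : j ∈ S
          · simp only [hdc_def, h, if_true, abs_zero]
            exact hε.le
          · simp only [hdc_def, h, if_false]
            exact hoffS j h
      _ = m * ε := by simp [mul_comm]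
  have hdg_le : vnorm (d ∘ g) ≤ M * (m * ε) := by
    have heq : L.mulVec (A.mulVec ds) = - L.mulVec (A.mulVec dc) := by
      rw [hAds, Matrix.mulVec_neg]
    calc vnorm (d ∘ g) = vnorm (L.mulVec (A.mulVec dc)) := by
          rw [hdg, heq, vnorm_neg]
      _ ≤ mnorm L * vnorm (A.mulVec dc) := vnorm_mulVec_le _ _
      _ ≤ M * (m * ε) := by
          apply mul_le_mul hL2 hAdc_le (vnorm_nonneg _) hM0
  have hds_eq : vnorm ds = vnorm (d ∘ g) := by
    unfold vnorm
    congr 1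
    have e1 : ∑ j : Fin r, ((d ∘ g) j)^2 = ∑ i ∈ S, (d i)^2 := hgsum fun i => (d i)^2
    have e2 : ∑ i, (ds i)^2 = ∑ i ∈ S, (d i)^2 := by
      have hite : ∀ i : Fin m, (ds i)^2 = if i ∈ S then (d i)^2 else 0 := by
        intro i
        by_cases h : i ∈ S <;> simp [hds_def, h]
      rw [Finset.sum_congr rfl (fun i _ => hite i), Finset.sum_ite_mem, Finset.univ_inter]
    rw [e2, e1]
  have hdc_le : vnorm dc ≤ Real.sqrt m * ε := by
    have hsum : ∑ i, (dc i)^2 ≤ ∑ _i : Fin m, ε^2 := by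
      apply Finset.sum_le_sum
      intro i _
      by_cases h : i ∈ S
      · simp only [hdc_def, h, if_true]
        nlinarith [sq_nonneg ε]
      · simp only [hdc_def, h, if_false]
        have h1 := hoffS i h
        nlinarith [abs_nonneg (d i), sq_abs (d i)]
    calc vnorm dc ≤ Real.sqrt (∑ _i : Fin m, ε^2) := Real.sqrt_le_sqrt hsum
      _ = Real.sqrt ((m : ℝ) * ε^2) := by
          rw [Finset.sum_const, Finset.card_univ, Fintype.card_fin, nsmul_eq_mul]
      _ = Real.sqrt m * ε := by
          rw [Real.sqrt_mul (by positivity), Real.sqrt_sq hε.le]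
  have hsqrtm : Real.sqrt m < m := by
    rw [show Real.sqrt (m:ℝ) < (m:ℝ) ↔ (m:ℝ) < (m:ℝ)^2 from Real.sqrt_lt' (by positivity)]
    nlinarith
  have hdc_lt : vnorm dc < m * ε := lt_of_le_of_lt hdc_le (by nlinarith)
  have htri : vnorm d ≤ vnorm ds + vnorm dc := by
    calc vnorm d = vnorm (ds + dc) := by rw [← hsplit]
      _ ≤ vnorm ds + vnorm dc := vnorm_add_le ds dc
  have hrhs : (M+1) * m * σ * Real.sqrt (2 * Real.log m) = M * (m * ε) + m * ε := by
    rw [hε_def]; ring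
  have hfinal : vnorm d < (M+1) * m * σ * Real.sqrt (2 * Real.log m) := by
    rw [hrhs]
    have := hds_eq ▸ hdg_le
    linarith
  exact hfinal
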